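/- Let A be a Banach algebra, B a norm-closed subalgebra of A** (with first Arens product) containing the canonical image of A, and T, S : A → A continuous linear maps. If B has the T-w*w property and B is weakly T''-S''-amenable, then A is weakly T-S-amenable. -/

import Mathlib

set_option maxHeartbeats 1000000

open Filter Topology ContinuousLinearMap NormedSpace

namespace NormedSpace

/-- The topological dual of a seminormed space `E` (removed from Mathlib; restored with its old meaning). -/
abbrev Dual (𝕜 : Type*) [NontriviallyNormedField 𝕜] (E : Type*) [SeminormedAddCommGroup E]
    [NormedSpace 𝕜 E] : Type _ :=
  E →L[𝕜] 𝕜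

end NormedSpace

noncomputable section ArensSetup

/-- The adjoint (transpose) of a continuous linear map between normed spaces. -/
def adjCLM {E F : Type*} [SeminormedAddCommGroup E] [NormedSpace ℝ E]
    [SeminormedAddCommGroup F] [NormedSpace ℝ F] (T : E →L[ℝ] F) :
    Dual ℝ F →L[ℝ] Dual ℝ E :=
  (ContinuousLinearMap.compL ℝ E F ℝ).flip T

@[simp] theorem adjCLM_apply {E F : Type*} [SeminormedAddCommGroup E] [NormedSpace ℝ E]
    [SeminormedAddCommGroup F] [NormedSpace ℝ F] (T : E →L[ℝ] F) (g : Dual ℝ F) (x : E) :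
    adjCLM T g x = g (T x) := rfl

/-- One-step Arens-type adjoint of a bounded bilinear map:
`ext1 β g' e = g' ∘ (β e)`. -/
def ext1 {E F G : Type*} [SeminormedAddCommGroup E] [NormedSpace ℝ E]
    [SeminormedAddCommGroup F] [NormedSpace ℝ F] [SeminormedAddCommGroup G] [NormedSpace ℝ G]
    (β : E →L[ℝ] F →L[ℝ] G) : Dual ℝ G →L[ℝ] E →L[ℝ] Dual ℝ F :=
  ((ContinuousLinearMap.compL ℝ F G ℝ).flip.comp β).flip

@[simp] theorem ext1_apply {E F G : Type*} [SeminormedAddCommGroup E] [NormedSpace ℝ E]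
    [SeminormedAddCommGroup F] [NormedSpace ℝ F] [SeminormedAddCommGroup G] [NormedSpace ℝ G]
    (β : E →L[ℝ] F →L[ℝ] G) (g' : Dual ℝ G) (e : E) (f : F) :
    ext1 β g' e f = g' (β e f) := rfl

/-- Triple adjoint: the (first) Arens extension of a bounded bilinear map to the
second duals. -/
def ext3 {E F G : Type*} [SeminormedAddCommGroup E] [NormedSpace ℝ E]
    [SeminormedAddCommGroup F] [NormedSpace ℝ F] [SeminormedAddCommGroup G] [NormedSpace ℝ G]
    (β : E →L[ℝ] F →L[ℝ] G) :
    Dual ℝ (Dual ℝ E) →L[ℝ] Dual ℝ (Dual ℝ F) →L[ℝ] Dual ℝ (Dual ℝ G) :=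
  ext1 (ext1 (ext1 β))

variable (A : Type*) [NonUnitalNormedRing A] [NormedSpace ℝ A]
  [SMulCommClass ℝ A A] [IsScalarTower ℝ A A] [CompleteSpace A]

/-- The first (left) Arens product on `A**`: `⟨a''b'', a'⟩ = ⟨a'', b''a'⟩`. -/
def fArens : Dual ℝ (Dual ℝ A) →L[ℝ] Dual ℝ (Dual ℝ A) →L[ℝ] Dual ℝ (Dual ℝ A) :=
  ext3 (ContinuousLinearMap.mul ℝ A)

/-- The second (right) Arens product on `A**`: `⟨a''∘b'', a'⟩ = ⟨b'', a'∘a''⟩`. -/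
def sArens : Dual ℝ (Dual ℝ A) →L[ℝ] Dual ℝ (Dual ℝ A) →L[ℝ] Dual ℝ (Dual ℝ A) :=
  (ext3 (ContinuousLinearMap.mul ℝ A).flip).flip

/-- `A` is Arens regular when the two Arens products on `A**` coincide. -/
def ArensRegular : Prop := fArens A = sArens A

variable {A}

/-- Weak-star to weak continuity for a map from the dual of `E` into `F`. -/
def WStarToWCont {E F : Type*} [SeminormedAddCommGroup E] [NormedSpace ℝ E]
    [SeminormedAddCommGroup F] [NormedSpace ℝ F] (f : Dual ℝ E → F) : Prop :=
  Continuous fun x : WeakDual ℝ E => toWeakSpace ℝ F (f (WeakDual.toStrongDual x))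

variable (A)

/-- The second adjoint `T'' : A** → A**` of `T : A → A`. -/
def secondAdj (T : A →L[ℝ] A) : Dual ℝ (Dual ℝ A) →L[ℝ] Dual ℝ (Dual ℝ A) :=
  adjCLM (adjCLM T)

/-- Left action of `A` on `A*`: `⟨a·a', b⟩ = ⟨a', ba⟩`. -/
def dualLeft : A →L[ℝ] Dual ℝ A →L[ℝ] Dual ℝ A :=
  (ext1 (ContinuousLinearMap.mul ℝ A).flip).flip

/-- Right action of `A` on `A*`: `⟨a'·a, b⟩ = ⟨a', ab⟩`. -/
def dualRight : Dual ℝ A →L[ℝ] A →L[ℝ] Dual ℝ A :=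
  ext1 (ContinuousLinearMap.mul ℝ A)

/-- Left action of `A**` (first Arens product) on `A***`. -/
def dualLeft2 : Dual ℝ (Dual ℝ A) →L[ℝ] Dual ℝ (Dual ℝ (Dual ℝ A)) →L[ℝ]
    Dual ℝ (Dual ℝ (Dual ℝ A)) :=
  (ext1 (fArens A).flip).flip

/-- Right action of `A**` (first Arens product) on `A***`. -/
def dualRight2 : Dual ℝ (Dual ℝ (Dual ℝ A)) →L[ℝ] Dual ℝ (Dual ℝ A) →L[ℝ]
    Dual ℝ (Dual ℝ (Dual ℝ A)) :=
  ext1 (fArens A)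

end ArensSetup

section BimoduleSetup

set_option maxHeartbeats 1000000

open Filter Topology ContinuousLinearMap NormedSpace

/-- A Banach `A`-bimodule: bounded bilinear left and right actions satisfying the
usual compatibility axioms. -/
structure BanachBimodule (A X : Type*) [NonUnitalNormedRing A] [NormedSpace ℝ A]
    [SMulCommClass ℝ A A] [IsScalarTower ℝ A A]
    [NormedAddCommGroup X] [NormedSpace ℝ X] [CompleteSpace X] where
  l : A →L[ℝ] X →L[ℝ] X
  r : X →L[ℝ] A →L[ℝ] X
  l_mul : ∀ a b x, l (a * b) x = l a (l b x)
  r_mul : ∀ x a b, r (r x a) b = r x (a * b)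
  l_r : ∀ a x b, l a (r x b) = r (l a x) b

variable {A X : Type*} [NonUnitalNormedRing A] [NormedSpace ℝ A]
  [SMulCommClass ℝ A A] [IsScalarTower ℝ A A] [CompleteSpace A]
  [NormedAddCommGroup X] [NormedSpace ℝ X] [CompleteSpace X]

/-- Left action of `A` on `X*`: `⟨a·f, x⟩ = ⟨f, x·a⟩`. -/
noncomputable def modDualLeft (M : BanachBimodule A X) : A →L[ℝ] Dual ℝ X →L[ℝ] Dual ℝ X :=
  (ext1 M.r.flip).flip

/-- Right action of `A` on `X*`: `⟨f·a, x⟩ = ⟨f, a·x⟩`. -/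
noncomputable def modDualRight (M : BanachBimodule A X) : Dual ℝ X →L[ℝ] A →L[ℝ] Dual ℝ X :=
  ext1 M.l

/-- Left action of `A**` on `X**` (first Arens extension). -/
noncomputable def modL2 (M : BanachBimodule A X) :
    Dual ℝ (Dual ℝ A) →L[ℝ] Dual ℝ (Dual ℝ X) →L[ℝ] Dual ℝ (Dual ℝ X) :=
  ext3 M.l

/-- Right action of `A**` on `X**` (first Arens extension); `modR2 M x'' a'' = x''a''`. -/
noncomputable def modR2 (M : BanachBimodule A X) :
    Dual ℝ (Dual ℝ X) →L[ℝ] Dual ℝ (Dual ℝ A) →L[ℝ] Dual ℝ (Dual ℝ X) :=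
  ext3 M.r

/-- Left action of `A**` on `X***`: `⟨a''·x''', x''⟩ = ⟨x''', x''a''⟩`. -/
noncomputable def modL3 (M : BanachBimodule A X) :
    Dual ℝ (Dual ℝ A) →L[ℝ] Dual ℝ (Dual ℝ (Dual ℝ X)) →L[ℝ] Dual ℝ (Dual ℝ (Dual ℝ X)) :=
  (ext1 (modR2 M).flip).flip

/-- Right action of `A**` on `X***`: `⟨x'''·a'', x''⟩ = ⟨x''', a''x''⟩`. -/
noncomputable def modR3 (M : BanachBimodule A X) :
    Dual ℝ (Dual ℝ (Dual ℝ X)) →L[ℝ] Dual ℝ (Dual ℝ A) →L[ℝ] Dual ℝ (Dual ℝ (Dual ℝ X)) :=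
  ext1 (modL2 M)

end BimoduleSetup

section DerivationSetup

variable {B Y : Type*} [SeminormedAddCommGroup B] [NormedSpace ℝ B]
  [SeminormedAddCommGroup Y] [NormedSpace ℝ Y]

/-- `D` is a derivation with respect to the multiplication `m` and the module
actions `l`, `r`. -/
def IsDeriv (m : B →L[ℝ] B →L[ℝ] B) (l : B →L[ℝ] Y →L[ℝ] Y)
    (r : Y →L[ℝ] B →L[ℝ] Y) (D : B →L[ℝ] Y) : Prop :=
  ∀ a b, D (m a b) = l a (D b) + r (D a) b

/-- `D` is an inner derivation: `D a = a·y − y·a` for some fixed `y`. -/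
def IsInner (l : B →L[ℝ] Y →L[ℝ] Y) (r : Y →L[ℝ] B →L[ℝ] Y) (D : B →L[ℝ] Y) : Prop :=
  ∃ y, ∀ a, D a = l a y - r y a

/-- `D` is a `T-S`-derivation: `D(ab) = T(a)·D(b) + D(a)·S(b)`. -/
def IsTSDeriv (m : B →L[ℝ] B →L[ℝ] B) (l : B →L[ℝ] Y →L[ℝ] Y)
    (r : Y →L[ℝ] B →L[ℝ] Y) (T S : B →L[ℝ] B) (D : B →L[ℝ] Y) : Prop :=
  ∀ a b, D (m a b) = l (T a) (D b) + r (D a) (S b)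

/-- `D` is an inner `T-S`-derivation: `D a = T(a)·y − y·S(a)` for some fixed `y`. -/
def IsTSInner (l : B →L[ℝ] Y →L[ℝ] Y) (r : Y →L[ℝ] B →L[ℝ] Y)
    (T S : B →L[ℝ] B) (D : B →L[ℝ] Y) : Prop :=
  ∃ y, ∀ a, D a = l (T a) y - r y (S a)

end DerivationSetup


section AuxDualRep
open Filter Topology ContinuousLinearMap NormedSpace

/-- A weak-star continuous linear functional on a dual space is evaluation at a point. -/
theorem exists_rep_of_weakStar_continuous {E : Type*} [SeminormedAddCommGroup E]
    [NormedSpace ℝ E] (F : Dual ℝ E →L[ℝ] ℝ)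
    (hF : Continuous fun x : WeakDual ℝ E => F (WeakDual.toStrongDual x)) :
    ∃ g : E, ∀ x : Dual ℝ E, F x = x g := by
  have ht : Filter.Tendsto (fun x : WeakDual ℝ E => F (WeakDual.toStrongDual x))
      (𝓝 0) (𝓝 0) := by
    have := hF.tendsto 0
    simpa using this
  have h0 : (fun x : WeakDual ℝ E => F (WeakDual.toStrongDual x)) ⁻¹' Metric.ball (0:ℝ) 1
      ∈ 𝓝 (0 : WeakDual ℝ E) := ht (Metric.ball_mem_nhds 0 one_pos)
  have hb := LinearMap.hasBasis_weakBilin (topDualPairing ℝ E)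
  replace h0 := hb.mem_iff.mp h0
  obtain ⟨U, hU, hUsub⟩ := h0
  obtain ⟨s, r, hr, rfl⟩ := (SeminormFamily.basisSets_iff _).mp hU
  have hker : (⨅ i : s, LinearMap.ker ((topDualPairing ℝ E).flip i.1)) ≤
      LinearMap.ker (F : Dual ℝ E →ₗ[ℝ] ℝ) := by
    intro x hx
    simp only [Submodule.mem_iInf, LinearMap.mem_ker, LinearMap.flip_apply,
      topDualPairing_apply] at hx ⊢
    have hsmall : ∀ t : ℝ, |t * F x| < 1 := by
      intro t
      have hmem : (t • x : WeakDual ℝ E) ∈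
          Seminorm.ball (s.sup (topDualPairing ℝ E).toSeminormFamily) 0 r := by
        rw [Seminorm.mem_ball_zero]
        refine Seminorm.finset_sup_apply_lt hr ?_
        intro e he
        rw [LinearMap.toSeminormFamily_apply]
        have hxe : x e = 0 := hx ⟨e, he⟩
        show ‖(t • x) e‖ < r
        simp [hxe, hr]
      have := hUsub hmem
      change F (WeakDual.toStrongDual (t • x : WeakDual ℝ E)) ∈ Metric.ball (0:ℝ) 1 at this
      simp only [Set.mem_preimage, Metric.mem_ball, dist_zero_right, Real.norm_eq_abs] at this
      convert this using 2
      show t * F x = F (t • x)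
      rw [map_smul, smul_eq_mul]
    by_contra hFx
    have hpos : (0:ℝ) < |F x| := abs_pos.mpr hFx
    have h2 := hsmall (2 / |F x|)
    rw [abs_mul, abs_div, abs_two, abs_abs, div_mul_cancel₀] at h2
    · linarith
    · exact ne_of_gt hpos
  have hspan := mem_span_of_iInf_ker_le_ker
    (L := fun i : s => (topDualPairing ℝ E).flip i.1) (K := (F : Dual ℝ E →ₗ[ℝ] ℝ)) hker
  rw [Submodule.mem_span_range_iff_exists_fun] at hspan
  obtain ⟨c, hc⟩ := hspan
  refine ⟨∑ i : s, c i • (i.1 : E), fun x => ?_⟩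
  have hx := LinearMap.congr_fun hc x
  simp only [LinearMap.coe_sum, Finset.sum_apply, LinearMap.smul_apply,
    LinearMap.flip_apply, topDualPairing_apply, ContinuousLinearMap.coe_coe,
    smul_eq_mul] at hx
  rw [← hx, map_sum]
  simp [smul_eq_mul]

end AuxDualRep

section Statements
set_option maxHeartbeats 1000000
open Filter Topology ContinuousLinearMap NormedSpace

variable {A : Type*} [NonUnitalNormedRing A] [NormedSpace ℝ A]
  [SMulCommClass ℝ A A] [IsScalarTower ℝ A A] [CompleteSpace A]

theorem fArens_J_J (a b : A) :
    fArens A (inclusionInDoubleDual ℝ A a) (inclusionInDoubleDual ℝ A b) =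
      inclusionInDoubleDual ℝ A (a * b) := by
  ext a'; rfl

theorem secondAdj_J (T : A →L[ℝ] A) (a : A) :
    secondAdj A T (inclusionInDoubleDual ℝ A a) = inclusionInDoubleDual ℝ A (T a) := by
  ext a'; rfl

theorem key_ident (T S : A →L[ℝ] A) (D : A →L[ℝ] Dual ℝ A)
    (hD : IsTSDeriv (ContinuousLinearMap.mul ℝ A) (dualLeft A) (dualRight A) T S D)
    (z : Dual ℝ (Dual ℝ A))
    (hwz : WStarToWCont (fun b'' => fArens A z (secondAdj A T b'')))
    (x y : Dual ℝ (Dual ℝ A)) :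
    adjCLM (adjCLM D) (fArens A x y) z =
      adjCLM (adjCLM D) y (fArens A z (secondAdj A T x)) +
      adjCLM (adjCLM D) x (fArens A (secondAdj A S y) z) := by
  have J_apply : ∀ (a : A) (a' : Dual ℝ A), inclusionInDoubleDual ℝ A a a' = a' a :=
    fun a a' => rfl
  -- Step 2: the identity when `x` is in the image of `A`.
  have step2 : ∀ (a : A) (y : Dual ℝ (Dual ℝ A)),
      adjCLM (adjCLM D) (fArens A (inclusionInDoubleDual ℝ A a) y) z =
        adjCLM (adjCLM D) y (fArens A z (secondAdj A T (inclusionInDoubleDual ℝ A a))) +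
        adjCLM (adjCLM D) (inclusionInDoubleDual ℝ A a) (fArens A (secondAdj A S y) z) := by
    intro a y
    have hg : ext1 (ContinuousLinearMap.mul ℝ A) (adjCLM D z) a =
        adjCLM D (fArens A z (inclusionInDoubleDual ℝ A (T a))) +
          adjCLM S (ext1 (ext1 (ContinuousLinearMap.mul ℝ A)) z (D a)) := by
      ext b
      have h1 : ext1 (ext1 (ContinuousLinearMap.mul ℝ A)) (inclusionInDoubleDual ℝ A (T a))
          (D b) = dualLeft A (T a) (D b) := by ext c; rfl
      show adjCLM D z (a * b) = _
      have h2 : adjCLM D z (a * b) = z (D (a * b)) := rfl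
      rw [ContinuousLinearMap.add_apply]
      have h3 : adjCLM D (fArens A z (inclusionInDoubleDual ℝ A (T a))) b =
          z (dualLeft A (T a) (D b)) := by
        show z (ext1 (ext1 (ContinuousLinearMap.mul ℝ A))
          (inclusionInDoubleDual ℝ A (T a)) (D b)) = _
        rw [h1]
      have h4 : adjCLM S (ext1 (ext1 (ContinuousLinearMap.mul ℝ A)) z (D a)) b =
          z (dualRight A (D a) (S b)) := rfl
      have hDab : D (a * b) = dualLeft A (T a) (D b) + dualRight A (D a) (S b) := hD a b
      rw [h2, h3, h4, hDab, map_add]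
    calc adjCLM (adjCLM D) (fArens A (inclusionInDoubleDual ℝ A a) y) z
        = y (ext1 (ContinuousLinearMap.mul ℝ A) (adjCLM D z) a) := rfl
      _ = y (adjCLM D (fArens A z (inclusionInDoubleDual ℝ A (T a))) +
            adjCLM S (ext1 (ext1 (ContinuousLinearMap.mul ℝ A)) z (D a))) := by rw [hg]
      _ = y (adjCLM D (fArens A z (inclusionInDoubleDual ℝ A (T a)))) +
            y (adjCLM S (ext1 (ext1 (ContinuousLinearMap.mul ℝ A)) z (D a))) := map_add y _ _
      _ = adjCLM (adjCLM D) y (fArens A z (secondAdj A T (inclusionInDoubleDual ℝ A a))) +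
            adjCLM (adjCLM D) (inclusionInDoubleDual ℝ A a)
              (fArens A (secondAdj A S y) z) := by rw [secondAdj_J]; rfl
  -- Step 3: general `x`, using the `T`-w*w property.
  have hcont : Continuous fun b'' : WeakDual ℝ (Dual ℝ A) =>
      (adjCLM (adjCLM D) y ∘L fArens A z ∘L secondAdj A T) (WeakDual.toStrongDual b'') := by
    have heval : Continuous fun w : WeakSpace ℝ (Dual ℝ (Dual ℝ A)) =>
        (topDualPairing ℝ (Dual ℝ (Dual ℝ A))).flip w (adjCLM (adjCLM D) y) :=
      WeakBilin.eval_continuous _ _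
    exact heval.comp hwz
  obtain ⟨g, hg⟩ := exists_rep_of_weakStar_continuous
    (adjCLM (adjCLM D) y ∘L fArens A z ∘L secondAdj A T) hcont
  have hfun2 : ext1 (ext1 (ContinuousLinearMap.mul ℝ A)) y (adjCLM D z) =
      g + adjCLM D (fArens A (secondAdj A S y) z) := by
    ext a
    have h2 := step2 a y
    have hga := hg (inclusionInDoubleDual ℝ A a)
    rw [ContinuousLinearMap.add_apply]
    have l1 : adjCLM (adjCLM D) (fArens A (inclusionInDoubleDual ℝ A a) y) z =
        ext1 (ext1 (ContinuousLinearMap.mul ℝ A)) y (adjCLM D z) a := rfl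
    have l2 : adjCLM (adjCLM D) y (fArens A z (secondAdj A T (inclusionInDoubleDual ℝ A a))) =
        (adjCLM (adjCLM D) y ∘L fArens A z ∘L secondAdj A T)
          (inclusionInDoubleDual ℝ A a) := rfl
    have l3 : adjCLM (adjCLM D) (inclusionInDoubleDual ℝ A a)
        (fArens A (secondAdj A S y) z) = adjCLM D (fArens A (secondAdj A S y) z) a := rfl
    rw [l1, l2, l3, hga] at h2
    exact h2
  calc adjCLM (adjCLM D) (fArens A x y) z
      = x (ext1 (ext1 (ContinuousLinearMap.mul ℝ A)) y (adjCLM D z)) := rfl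
    _ = x (g + adjCLM D (fArens A (secondAdj A S y) z)) := by rw [hfun2]
    _ = x g + x (adjCLM D (fArens A (secondAdj A S y) z)) := map_add x _ _
    _ = _ := by rw [← hg x]; rfl

/-- If `B` is a closed subalgebra of `A**` containing `A`, with the `T-w*w` property, and
`B` is weakly `T''-S''`-amenable, then `A` is weakly `T-S`-amenable. -/
theorem weaklyTSamenable_of_subalgebra (T S : A →L[ℝ] A)
    (B : Submodule ℝ (Dual ℝ (Dual ℝ A))) (hclosed : IsClosed (B : Set (Dual ℝ (Dual ℝ A))))
    (hmulmem : ∀ x ∈ B, ∀ y ∈ B, fArens A x y ∈ B)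
    (hAsub : ∀ a : A, inclusionInDoubleDual ℝ A a ∈ B)
    (hTmem : ∀ x ∈ B, secondAdj A T x ∈ B) (hSmem : ∀ x ∈ B, secondAdj A S x ∈ B)
    (hw : ∀ x ∈ B, WStarToWCont (fun b'' => fArens A x (secondAdj A T b'')))
    (hAm : ∀ G : B →L[ℝ] Dual ℝ B,
      (∀ x y z : B, G ⟨fArens A x.1 y.1, hmulmem x.1 x.2 y.1 y.2⟩ z =
          G y ⟨fArens A z.1 (secondAdj A T x.1), hmulmem z.1 z.2 _ (hTmem x.1 x.2)⟩ +
          G x ⟨fArens A (secondAdj A S y.1) z.1, hmulmem _ (hSmem y.1 y.2) z.1 z.2⟩) →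
      ∃ f : Dual ℝ B, ∀ x z : B, G x z =
          f ⟨fArens A z.1 (secondAdj A T x.1), hmulmem z.1 z.2 _ (hTmem x.1 x.2)⟩ -
          f ⟨fArens A (secondAdj A S x.1) z.1, hmulmem _ (hSmem x.1 x.2) z.1 z.2⟩) :
    ∀ D : A →L[ℝ] Dual ℝ A,
      IsTSDeriv (ContinuousLinearMap.mul ℝ A) (dualLeft A) (dualRight A) T S D →
      IsTSInner (dualLeft A) (dualRight A) T S D := by
  intro D hD
  obtain ⟨f, hf⟩ := hAm (adjCLM B.subtypeL ∘L adjCLM (adjCLM D) ∘L B.subtypeL)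
    (fun x y z => key_ident T S D hD z.1 (hw z.1 z.2) x.1 y.1)
  refine ⟨f ∘L (inclusionInDoubleDual ℝ A).codRestrict B hAsub, fun a => ?_⟩
  ext b
  have h := hf ⟨inclusionInDoubleDual ℝ A a, hAsub a⟩ ⟨inclusionInDoubleDual ℝ A b, hAsub b⟩
  have e1 : (⟨fArens A (inclusionInDoubleDual ℝ A b)
        (secondAdj A T (inclusionInDoubleDual ℝ A a)),
        hmulmem _ (hAsub b) _ (hTmem _ (hAsub a))⟩ : B) =
      ⟨inclusionInDoubleDual ℝ A (b * T a), hAsub _⟩ :=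
    Subtype.ext (show fArens A (inclusionInDoubleDual ℝ A b)
      (secondAdj A T (inclusionInDoubleDual ℝ A a)) =
      inclusionInDoubleDual ℝ A (b * T a) by rw [secondAdj_J, fArens_J_J])
  have e2 : (⟨fArens A (secondAdj A S (inclusionInDoubleDual ℝ A a))
        (inclusionInDoubleDual ℝ A b),
        hmulmem _ (hSmem _ (hAsub a)) _ (hAsub b)⟩ : B) =
      ⟨inclusionInDoubleDual ℝ A (S a * b), hAsub _⟩ :=
    Subtype.ext (show fArens A (secondAdj A S (inclusionInDoubleDual ℝ A a))
      (inclusionInDoubleDual ℝ A b) =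
      inclusionInDoubleDual ℝ A (S a * b) by rw [secondAdj_J, fArens_J_J])
  rw [e1, e2] at h
  have hL : (adjCLM B.subtypeL ∘L adjCLM (adjCLM D) ∘L B.subtypeL)
      ⟨inclusionInDoubleDual ℝ A a, hAsub a⟩ ⟨inclusionInDoubleDual ℝ A b, hAsub b⟩ =
      D a b := rfl
  replace h := hL.symm.trans h
  rw [ContinuousLinearMap.sub_apply]
  have hdl : dualLeft A (T a) (f ∘L (inclusionInDoubleDual ℝ A).codRestrict B hAsub) b =
      f ⟨inclusionInDoubleDual ℝ A (b * T a), hAsub _⟩ := rfl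
  have hdr : dualRight A (f ∘L (inclusionInDoubleDual ℝ A).codRestrict B hAsub) (S a) b =
      f ⟨inclusionInDoubleDual ℝ A (S a * b), hAsub _⟩ := rfl
  rw [hdl, hdr]
  exact h


end Statements
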